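/- The real cube root of 5, i.e. the real number 5^{1/3}, is an eigenvalue of the 3-power hypergraph K₄^(3), where K₄ is the complete graph on four vertices. -/

import Mathlib

open Finset

/-- `(lam, x)` is an eigenpair of the `k`-uniform hypergraph with hyperedge set `E`:
`x` is nonzero and for every vertex `i`,
`lam * x i ^ (k-1) = ∑_{e ∈ E, i ∈ e} ∏_{v ∈ e \ {i}} x v`. -/
def IsHypergraphEigenpair {W : Type*} [Fintype W] [DecidableEq W]
    (k : ℕ) (E : Finset (Finset W)) (lam : ℂ) (x : W → ℂ) : Prop :=
  x ≠ 0 ∧ ∀ i : W, lam * x i ^ (k - 1) =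
    ∑ e ∈ E.filter (fun e => i ∈ e), ∏ v ∈ e.erase i, x v

/-- `lam` is an eigenvalue of the `k`-uniform hypergraph with hyperedge set `E`. -/
def IsHypergraphEigenvalue {W : Type*} [Fintype W] [DecidableEq W]
    (k : ℕ) (E : Finset (Finset W)) (lam : ℂ) : Prop :=
  ∃ x, IsHypergraphEigenpair k E lam x

/-- The hyperedge of the `k`-power hypergraph `G^(k)` corresponding to the edge `e` of `G`:
it consists of the two endpoints of `e` together with the `k - 2` added vertices on `e`. -/
def powerEdge {V : Type*} [Fintype V] [DecidableEq V] (G : SimpleGraph V) [DecidableRel G.Adj]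
    (k : ℕ) (e : G.edgeSet) : Finset (V ⊕ (G.edgeSet × Fin (k - 2))) :=
  Finset.univ.filter (fun v =>
    (∃ i, v = Sum.inl i ∧ i ∈ (e : Sym2 V)) ∨ ∃ t, v = Sum.inr (e, t))

/-- The hyperedge set of the `k`-power hypergraph `G^(k)`, whose vertices are the vertices of `G`
(`Sum.inl`) together with `k - 2` new vertices for each edge of `G` (`Sum.inr`). -/
def powerEdges {V : Type*} [Fintype V] [DecidableEq V] (G : SimpleGraph V) [DecidableRel G.Adj]
    (k : ℕ) : Finset (Finset (V ⊕ (G.edgeSet × Fin (k - 2)))) :=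
  Finset.univ.image (powerEdge G k)

abbrev G4 : SimpleGraph (Fin 4) := ⊤
def E01 : G4.edgeSet := ⟨s(0,1), by decide⟩
def E02 : G4.edgeSet := ⟨s(0,2), by decide⟩
def E03 : G4.edgeSet := ⟨s(0,3), by decide⟩
def E12 : G4.edgeSet := ⟨s(1,2), by decide⟩
def E13 : G4.edgeSet := ⟨s(1,3), by decide⟩
def E23 : G4.edgeSet := ⟨s(2,3), by decide⟩

lemma univ_edges : (Finset.univ : Finset G4.edgeSet) = {E01, E02, E03, E12, E13, E23} := by decide

lemma powerEdge_inj : Function.Injective (powerEdge G4 3) := by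
  intro e1 e2 h
  have h1 : Sum.inr (e1, (0 : Fin (3-2))) ∈ powerEdge G4 3 e1 := by
    simp [powerEdge]
  rw [h] at h1
  simp [powerEdge] at h1
  exact h1

lemma sum_red (i : Fin 4 ⊕ (G4.edgeSet × Fin (3-2))) (f : Fin 4 ⊕ (G4.edgeSet × Fin (3-2)) → ℂ) :
    ∑ E ∈ (powerEdges G4 3).filter (fun E => i ∈ E), ∏ v ∈ E.erase i, f v
    = ∑ e ∈ ({E01, E02, E03, E12, E13, E23} : Finset G4.edgeSet),
        if i ∈ powerEdge G4 3 e then ∏ v ∈ (powerEdge G4 3 e).erase i, f v else 0 := by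
  rw [powerEdges, Finset.filter_image, Finset.sum_image (fun a _ b _ h => powerEdge_inj h),
    Finset.sum_filter, univ_edges]

lemma sum_at0 (f : Fin 4 ⊕ (G4.edgeSet × Fin (3-2)) → ℂ) :
    ∑ E ∈ (powerEdges G4 3).filter (fun E => Sum.inl 0 ∈ E), ∏ v ∈ E.erase (Sum.inl 0), f v
    = f (Sum.inl 1) * f (Sum.inr (E01, 0)) + f (Sum.inl 2) * f (Sum.inr (E02, 0)) + f (Sum.inl 3) * f (Sum.inr (E03, 0)) := by
  rw [sum_red]
  rw [Finset.sum_insert (by decide), Finset.sum_insert (by decide), Finset.sum_insert (by decide), Finset.sum_insert (by decide), Finset.sum_insert (by decide), Finset.sum_singleton]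
  rw [if_pos (show Sum.inl 0 ∈ powerEdge G4 3 E01 by decide), if_pos (show Sum.inl 0 ∈ powerEdge G4 3 E02 by decide), if_pos (show Sum.inl 0 ∈ powerEdge G4 3 E03 by decide), if_neg (show Sum.inl 0 ∉ powerEdge G4 3 E12 by decide), if_neg (show Sum.inl 0 ∉ powerEdge G4 3 E13 by decide), if_neg (show Sum.inl 0 ∉ powerEdge G4 3 E23 by decide)]
  rw [show (powerEdge G4 3 E01).erase (Sum.inl 0) = {Sum.inl 1, Sum.inr (E01, 0)} from by decide, show (powerEdge G4 3 E02).erase (Sum.inl 0) = {Sum.inl 2, Sum.inr (E02, 0)} from by decide, show (powerEdge G4 3 E03).erase (Sum.inl 0) = {Sum.inl 3, Sum.inr (E03, 0)} from by decide]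
  rw [Finset.prod_pair (by decide), Finset.prod_pair (by decide), Finset.prod_pair (by decide)]
  ring

lemma sum_at1 (f : Fin 4 ⊕ (G4.edgeSet × Fin (3-2)) → ℂ) :
    ∑ E ∈ (powerEdges G4 3).filter (fun E => Sum.inl 1 ∈ E), ∏ v ∈ E.erase (Sum.inl 1), f v
    = f (Sum.inl 0) * f (Sum.inr (E01, 0)) + f (Sum.inl 2) * f (Sum.inr (E12, 0)) + f (Sum.inl 3) * f (Sum.inr (E13, 0)) := by
  rw [sum_red]
  rw [Finset.sum_insert (by decide), Finset.sum_insert (by decide), Finset.sum_insert (by decide), Finset.sum_insert (by decide), Finset.sum_insert (by decide), Finset.sum_singleton]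
  rw [if_pos (show Sum.inl 1 ∈ powerEdge G4 3 E01 by decide), if_neg (show Sum.inl 1 ∉ powerEdge G4 3 E02 by decide), if_neg (show Sum.inl 1 ∉ powerEdge G4 3 E03 by decide), if_pos (show Sum.inl 1 ∈ powerEdge G4 3 E12 by decide), if_pos (show Sum.inl 1 ∈ powerEdge G4 3 E13 by decide), if_neg (show Sum.inl 1 ∉ powerEdge G4 3 E23 by decide)]
  rw [show (powerEdge G4 3 E01).erase (Sum.inl 1) = {Sum.inl 0, Sum.inr (E01, 0)} from by decide, show (powerEdge G4 3 E12).erase (Sum.inl 1) = {Sum.inl 2, Sum.inr (E12, 0)} from by decide, show (powerEdge G4 3 E13).erase (Sum.inl 1) = {Sum.inl 3, Sum.inr (E13, 0)} from by decide]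
  rw [Finset.prod_pair (by decide), Finset.prod_pair (by decide), Finset.prod_pair (by decide)]
  ring

lemma sum_at2 (f : Fin 4 ⊕ (G4.edgeSet × Fin (3-2)) → ℂ) :
    ∑ E ∈ (powerEdges G4 3).filter (fun E => Sum.inl 2 ∈ E), ∏ v ∈ E.erase (Sum.inl 2), f v
    = f (Sum.inl 0) * f (Sum.inr (E02, 0)) + f (Sum.inl 1) * f (Sum.inr (E12, 0)) + f (Sum.inl 3) * f (Sum.inr (E23, 0)) := by
  rw [sum_red]
  rw [Finset.sum_insert (by decide), Finset.sum_insert (by decide), Finset.sum_insert (by decide), Finset.sum_insert (by decide), Finset.sum_insert (by decide), Finset.sum_singleton]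
  rw [if_neg (show Sum.inl 2 ∉ powerEdge G4 3 E01 by decide), if_pos (show Sum.inl 2 ∈ powerEdge G4 3 E02 by decide), if_neg (show Sum.inl 2 ∉ powerEdge G4 3 E03 by decide), if_pos (show Sum.inl 2 ∈ powerEdge G4 3 E12 by decide), if_neg (show Sum.inl 2 ∉ powerEdge G4 3 E13 by decide), if_pos (show Sum.inl 2 ∈ powerEdge G4 3 E23 by decide)]
  rw [show (powerEdge G4 3 E02).erase (Sum.inl 2) = {Sum.inl 0, Sum.inr (E02, 0)} from by decide, show (powerEdge G4 3 E12).erase (Sum.inl 2) = {Sum.inl 1, Sum.inr (E12, 0)} from by decide, show (powerEdge G4 3 E23).erase (Sum.inl 2) = {Sum.inl 3, Sum.inr (E23, 0)} from by decide]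
  rw [Finset.prod_pair (by decide), Finset.prod_pair (by decide), Finset.prod_pair (by decide)]
  ring

lemma sum_at3 (f : Fin 4 ⊕ (G4.edgeSet × Fin (3-2)) → ℂ) :
    ∑ E ∈ (powerEdges G4 3).filter (fun E => Sum.inl 3 ∈ E), ∏ v ∈ E.erase (Sum.inl 3), f v
    = f (Sum.inl 0) * f (Sum.inr (E03, 0)) + f (Sum.inl 1) * f (Sum.inr (E13, 0)) + f (Sum.inl 2) * f (Sum.inr (E23, 0)) := by
  rw [sum_red]
  rw [Finset.sum_insert (by decide), Finset.sum_insert (by decide), Finset.sum_insert (by decide), Finset.sum_insert (by decide), Finset.sum_insert (by decide), Finset.sum_singleton]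
  rw [if_neg (show Sum.inl 3 ∉ powerEdge G4 3 E01 by decide), if_neg (show Sum.inl 3 ∉ powerEdge G4 3 E02 by decide), if_pos (show Sum.inl 3 ∈ powerEdge G4 3 E03 by decide), if_neg (show Sum.inl 3 ∉ powerEdge G4 3 E12 by decide), if_pos (show Sum.inl 3 ∈ powerEdge G4 3 E13 by decide), if_pos (show Sum.inl 3 ∈ powerEdge G4 3 E23 by decide)]
  rw [show (powerEdge G4 3 E03).erase (Sum.inl 3) = {Sum.inl 0, Sum.inr (E03, 0)} from by decide, show (powerEdge G4 3 E13).erase (Sum.inl 3) = {Sum.inl 1, Sum.inr (E13, 0)} from by decide, show (powerEdge G4 3 E23).erase (Sum.inl 3) = {Sum.inl 2, Sum.inr (E23, 0)} from by decide]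
  rw [Finset.prod_pair (by decide), Finset.prod_pair (by decide), Finset.prod_pair (by decide)]
  ring

lemma sum_atE01 (f : Fin 4 ⊕ (G4.edgeSet × Fin (3-2)) → ℂ) :
    ∑ E ∈ (powerEdges G4 3).filter (fun E => Sum.inr (E01, (0 : Fin (3-2))) ∈ E), ∏ w ∈ E.erase (Sum.inr (E01, 0)), f w
    = f (Sum.inl 0) * f (Sum.inl 1) := by
  rw [sum_red]
  rw [Finset.sum_insert (by decide), Finset.sum_insert (by decide), Finset.sum_insert (by decide), Finset.sum_insert (by decide), Finset.sum_insert (by decide), Finset.sum_singleton]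
  rw [if_pos (show Sum.inr (E01, (0 : Fin (3-2))) ∈ powerEdge G4 3 E01 by decide), if_neg (show Sum.inr (E01, (0 : Fin (3-2))) ∉ powerEdge G4 3 E02 by decide), if_neg (show Sum.inr (E01, (0 : Fin (3-2))) ∉ powerEdge G4 3 E03 by decide), if_neg (show Sum.inr (E01, (0 : Fin (3-2))) ∉ powerEdge G4 3 E12 by decide), if_neg (show Sum.inr (E01, (0 : Fin (3-2))) ∉ powerEdge G4 3 E13 by decide), if_neg (show Sum.inr (E01, (0 : Fin (3-2))) ∉ powerEdge G4 3 E23 by decide)]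
  rw [show (powerEdge G4 3 E01).erase (Sum.inr (E01, 0)) = {Sum.inl 0, Sum.inl 1} from by decide]
  rw [Finset.prod_pair (by decide)]
  ring

lemma sum_atE02 (f : Fin 4 ⊕ (G4.edgeSet × Fin (3-2)) → ℂ) :
    ∑ E ∈ (powerEdges G4 3).filter (fun E => Sum.inr (E02, (0 : Fin (3-2))) ∈ E), ∏ w ∈ E.erase (Sum.inr (E02, 0)), f w
    = f (Sum.inl 0) * f (Sum.inl 2) := by
  rw [sum_red]
  rw [Finset.sum_insert (by decide), Finset.sum_insert (by decide), Finset.sum_insert (by decide), Finset.sum_insert (by decide), Finset.sum_insert (by decide), Finset.sum_singleton]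
  rw [if_neg (show Sum.inr (E02, (0 : Fin (3-2))) ∉ powerEdge G4 3 E01 by decide), if_pos (show Sum.inr (E02, (0 : Fin (3-2))) ∈ powerEdge G4 3 E02 by decide), if_neg (show Sum.inr (E02, (0 : Fin (3-2))) ∉ powerEdge G4 3 E03 by decide), if_neg (show Sum.inr (E02, (0 : Fin (3-2))) ∉ powerEdge G4 3 E12 by decide), if_neg (show Sum.inr (E02, (0 : Fin (3-2))) ∉ powerEdge G4 3 E13 by decide), if_neg (show Sum.inr (E02, (0 : Fin (3-2))) ∉ powerEdge G4 3 E23 by decide)]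
  rw [show (powerEdge G4 3 E02).erase (Sum.inr (E02, 0)) = {Sum.inl 0, Sum.inl 2} from by decide]
  rw [Finset.prod_pair (by decide)]
  ring

lemma sum_atE03 (f : Fin 4 ⊕ (G4.edgeSet × Fin (3-2)) → ℂ) :
    ∑ E ∈ (powerEdges G4 3).filter (fun E => Sum.inr (E03, (0 : Fin (3-2))) ∈ E), ∏ w ∈ E.erase (Sum.inr (E03, 0)), f w
    = f (Sum.inl 0) * f (Sum.inl 3) := by
  rw [sum_red]
  rw [Finset.sum_insert (by decide), Finset.sum_insert (by decide), Finset.sum_insert (by decide), Finset.sum_insert (by decide), Finset.sum_insert (by decide), Finset.sum_singleton]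
  rw [if_neg (show Sum.inr (E03, (0 : Fin (3-2))) ∉ powerEdge G4 3 E01 by decide), if_neg (show Sum.inr (E03, (0 : Fin (3-2))) ∉ powerEdge G4 3 E02 by decide), if_pos (show Sum.inr (E03, (0 : Fin (3-2))) ∈ powerEdge G4 3 E03 by decide), if_neg (show Sum.inr (E03, (0 : Fin (3-2))) ∉ powerEdge G4 3 E12 by decide), if_neg (show Sum.inr (E03, (0 : Fin (3-2))) ∉ powerEdge G4 3 E13 by decide), if_neg (show Sum.inr (E03, (0 : Fin (3-2))) ∉ powerEdge G4 3 E23 by decide)]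
  rw [show (powerEdge G4 3 E03).erase (Sum.inr (E03, 0)) = {Sum.inl 0, Sum.inl 3} from by decide]
  rw [Finset.prod_pair (by decide)]
  ring

lemma sum_atE12 (f : Fin 4 ⊕ (G4.edgeSet × Fin (3-2)) → ℂ) :
    ∑ E ∈ (powerEdges G4 3).filter (fun E => Sum.inr (E12, (0 : Fin (3-2))) ∈ E), ∏ w ∈ E.erase (Sum.inr (E12, 0)), f w
    = f (Sum.inl 1) * f (Sum.inl 2) := by
  rw [sum_red]
  rw [Finset.sum_insert (by decide), Finset.sum_insert (by decide), Finset.sum_insert (by decide), Finset.sum_insert (by decide), Finset.sum_insert (by decide), Finset.sum_singleton]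
  rw [if_neg (show Sum.inr (E12, (0 : Fin (3-2))) ∉ powerEdge G4 3 E01 by decide), if_neg (show Sum.inr (E12, (0 : Fin (3-2))) ∉ powerEdge G4 3 E02 by decide), if_neg (show Sum.inr (E12, (0 : Fin (3-2))) ∉ powerEdge G4 3 E03 by decide), if_pos (show Sum.inr (E12, (0 : Fin (3-2))) ∈ powerEdge G4 3 E12 by decide), if_neg (show Sum.inr (E12, (0 : Fin (3-2))) ∉ powerEdge G4 3 E13 by decide), if_neg (show Sum.inr (E12, (0 : Fin (3-2))) ∉ powerEdge G4 3 E23 by decide)]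
  rw [show (powerEdge G4 3 E12).erase (Sum.inr (E12, 0)) = {Sum.inl 1, Sum.inl 2} from by decide]
  rw [Finset.prod_pair (by decide)]
  ring

lemma sum_atE13 (f : Fin 4 ⊕ (G4.edgeSet × Fin (3-2)) → ℂ) :
    ∑ E ∈ (powerEdges G4 3).filter (fun E => Sum.inr (E13, (0 : Fin (3-2))) ∈ E), ∏ w ∈ E.erase (Sum.inr (E13, 0)), f w
    = f (Sum.inl 1) * f (Sum.inl 3) := by
  rw [sum_red]
  rw [Finset.sum_insert (by decide), Finset.sum_insert (by decide), Finset.sum_insert (by decide), Finset.sum_insert (by decide), Finset.sum_insert (by decide), Finset.sum_singleton]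
  rw [if_neg (show Sum.inr (E13, (0 : Fin (3-2))) ∉ powerEdge G4 3 E01 by decide), if_neg (show Sum.inr (E13, (0 : Fin (3-2))) ∉ powerEdge G4 3 E02 by decide), if_neg (show Sum.inr (E13, (0 : Fin (3-2))) ∉ powerEdge G4 3 E03 by decide), if_neg (show Sum.inr (E13, (0 : Fin (3-2))) ∉ powerEdge G4 3 E12 by decide), if_pos (show Sum.inr (E13, (0 : Fin (3-2))) ∈ powerEdge G4 3 E13 by decide), if_neg (show Sum.inr (E13, (0 : Fin (3-2))) ∉ powerEdge G4 3 E23 by decide)]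
  rw [show (powerEdge G4 3 E13).erase (Sum.inr (E13, 0)) = {Sum.inl 1, Sum.inl 3} from by decide]
  rw [Finset.prod_pair (by decide)]
  ring

lemma sum_atE23 (f : Fin 4 ⊕ (G4.edgeSet × Fin (3-2)) → ℂ) :
    ∑ E ∈ (powerEdges G4 3).filter (fun E => Sum.inr (E23, (0 : Fin (3-2))) ∈ E), ∏ w ∈ E.erase (Sum.inr (E23, 0)), f w
    = f (Sum.inl 2) * f (Sum.inl 3) := by
  rw [sum_red]
  rw [Finset.sum_insert (by decide), Finset.sum_insert (by decide), Finset.sum_insert (by decide), Finset.sum_insert (by decide), Finset.sum_insert (by decide), Finset.sum_singleton]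
  rw [if_neg (show Sum.inr (E23, (0 : Fin (3-2))) ∉ powerEdge G4 3 E01 by decide), if_neg (show Sum.inr (E23, (0 : Fin (3-2))) ∉ powerEdge G4 3 E02 by decide), if_neg (show Sum.inr (E23, (0 : Fin (3-2))) ∉ powerEdge G4 3 E03 by decide), if_neg (show Sum.inr (E23, (0 : Fin (3-2))) ∉ powerEdge G4 3 E12 by decide), if_neg (show Sum.inr (E23, (0 : Fin (3-2))) ∉ powerEdge G4 3 E13 by decide), if_pos (show Sum.inr (E23, (0 : Fin (3-2))) ∈ powerEdge G4 3 E23 by decide)]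
  rw [show (powerEdge G4 3 E23).erase (Sum.inr (E23, 0)) = {Sum.inl 2, Sum.inl 3} from by decide]
  rw [Finset.prod_pair (by decide)]
  ring


noncomputable def vv : ℝ := (5:ℝ) ^ ((1:ℝ)/6)
noncomputable def uu : ℝ := ((1 + vv^3)/2) ^ ((1:ℝ)/3)

noncomputable def x : Fin 4 ⊕ (G4.edgeSet × Fin (3-2)) → ℂ
  | .inl i => if i.val ≤ 1 then (vv : ℂ) else ((vv * uu^2 : ℝ) : ℂ)
  | .inr (e, _) => if (e : Sym2 (Fin 4)) = s(0,1) then ((-1:ℝ) : ℂ)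
      else if (e : Sym2 (Fin 4)) = s(2,3) then ((uu^2 : ℝ) : ℂ) else ((uu : ℝ) : ℂ)

lemma hvpos : 0 < vv := Real.rpow_pos_of_pos (by norm_num) _
lemma hv6 : vv^6 = 5 := by
  rw [vv, ← Real.rpow_natCast ((5:ℝ) ^ ((1:ℝ)/6)) 6, ← Real.rpow_mul (by norm_num)]
  norm_num
lemma hu3 : uu^3 = (1 + vv^3)/2 := by
  have h : (0:ℝ) ≤ (1 + vv^3)/2 := by nlinarith [pow_pos hvpos 3]
  rw [uu, ← Real.rpow_natCast (((1 + vv^3)/2) ^ ((1:ℝ)/3)) 3, ← Real.rpow_mul h]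
  norm_num
lemma hlam : (5:ℝ) ^ ((1:ℝ)/3) = vv^2 := by
  rw [vv, ← Real.rpow_natCast ((5:ℝ) ^ ((1:ℝ)/6)) 2, ← Real.rpow_mul (by norm_num)]
  norm_num

lemma x0 : x (Sum.inl 0) = (vv : ℂ) := by simp only [x]; rw [if_pos (by decide)]
lemma x1 : x (Sum.inl 1) = (vv : ℂ) := by simp only [x]; rw [if_pos (by decide)]
lemma x2 : x (Sum.inl 2) = ((vv * uu^2 : ℝ) : ℂ) := by simp only [x]; rw [if_neg (by decide)]
lemma x3 : x (Sum.inl 3) = ((vv * uu^2 : ℝ) : ℂ) := by simp only [x]; rw [if_neg (by decide)]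
lemma xw01 (t : Fin (3-2)) : x (Sum.inr (E01, t)) = ((-1:ℝ) : ℂ) := by
  simp only [x, E01]; rw [if_pos (by decide)]
lemma xw02 (t : Fin (3-2)) : x (Sum.inr (E02, t)) = ((uu : ℝ) : ℂ) := by
  simp only [x]; rw [if_neg (by decide), if_neg (by decide)]
lemma xw03 (t : Fin (3-2)) : x (Sum.inr (E03, t)) = ((uu : ℝ) : ℂ) := by
  simp only [x]; rw [if_neg (by decide), if_neg (by decide)]
lemma xw12 (t : Fin (3-2)) : x (Sum.inr (E12, t)) = ((uu : ℝ) : ℂ) := by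
  simp only [x]; rw [if_neg (by decide), if_neg (by decide)]
lemma xw13 (t : Fin (3-2)) : x (Sum.inr (E13, t)) = ((uu : ℝ) : ℂ) := by
  simp only [x]; rw [if_neg (by decide), if_neg (by decide)]
lemma xw23 (t : Fin (3-2)) : x (Sum.inr (E23, t)) = ((uu^2 : ℝ) : ℂ) := by
  simp only [x, E23]; rw [if_neg (by decide), if_pos (by decide)]

theorem cbrt_five_eigenvalue_of_K4_power3 :
    IsHypergraphEigenvalue 3 (powerEdges (⊤ : SimpleGraph (Fin 4)) 3)
      ((((5 : ℝ) ^ ((1 : ℝ) / 3) : ℝ) : ℂ)) := by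
  refine ⟨x, ?_, ?_⟩
  · intro h
    have h0 : x (Sum.inl 0) = 0 := congrFun h (Sum.inl 0)
    rw [x0] at h0
    exact absurd (Complex.ofReal_eq_zero.mp h0) hvpos.ne'
  · rintro (a | ⟨e, t⟩)
    · fin_cases a
      · show ((((5:ℝ) ^ ((1:ℝ)/3) : ℝ) : ℂ)) * x (Sum.inl 0) ^ (3-1)
          = ∑ E ∈ (powerEdges G4 3).filter (fun E => Sum.inl 0 ∈ E), ∏ v ∈ E.erase (Sum.inl 0), x v
        rw [sum_at0 x, x0, x1, x2, x3, xw01, xw02, xw03, hlam]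
        exact_mod_cast (show vv^2 * vv^2 = vv * (-1) + (vv*uu^2)*uu + (vv*uu^2)*uu by
          linear_combination (-2*vv) * hu3)
      · show ((((5:ℝ) ^ ((1:ℝ)/3) : ℝ) : ℂ)) * x (Sum.inl 1) ^ (3-1)
          = ∑ E ∈ (powerEdges G4 3).filter (fun E => Sum.inl 1 ∈ E), ∏ v ∈ E.erase (Sum.inl 1), x v
        rw [sum_at1 x, x0, x1, x2, x3, xw01, xw12, xw13, hlam]
        exact_mod_cast (show vv^2 * vv^2 = vv * (-1) + (vv*uu^2)*uu + (vv*uu^2)*uu by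
          linear_combination (-2*vv) * hu3)
      · show ((((5:ℝ) ^ ((1:ℝ)/3) : ℝ) : ℂ)) * x (Sum.inl 2) ^ (3-1)
          = ∑ E ∈ (powerEdges G4 3).filter (fun E => Sum.inl 2 ∈ E), ∏ v ∈ E.erase (Sum.inl 2), x v
        rw [sum_at2 x, x0, x1, x2, x3, xw02, xw12, xw23, hlam]
        exact_mod_cast (show vv^2 * (vv*uu^2)^2 = vv * uu + vv * uu + (vv*uu^2)*uu^2 by
          linear_combination (vv*uu*(vv^3-1)) * hu3 + (vv*uu/2) * hv6)
      · show ((((5:ℝ) ^ ((1:ℝ)/3) : ℝ) : ℂ)) * x (Sum.inl 3) ^ (3-1)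
          = ∑ E ∈ (powerEdges G4 3).filter (fun E => Sum.inl 3 ∈ E), ∏ v ∈ E.erase (Sum.inl 3), x v
        rw [sum_at3 x, x0, x1, x2, x3, xw03, xw13, xw23, hlam]
        exact_mod_cast (show vv^2 * (vv*uu^2)^2 = vv * uu + vv * uu + (vv*uu^2)*uu^2 by
          linear_combination (vv*uu*(vv^3-1)) * hu3 + (vv*uu/2) * hv6)
    · have ht : t = 0 := Fin.ext (by omega)
      subst ht
      have he : e ∈ ({E01, E02, E03, E12, E13, E23} : Finset G4.edgeSet) := by
        rw [← univ_edges]; exact Finset.mem_univ e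
      simp only [Finset.mem_insert, Finset.mem_singleton] at he
      rcases he with rfl | rfl | rfl | rfl | rfl | rfl
      · rw [sum_atE01 x, x0, x1, xw01, hlam]
        exact_mod_cast (show vv^2 * (-1:ℝ)^2 = vv * vv by linear_combination 0 * hu3)
      · rw [sum_atE02 x, x0, x2, xw02, hlam]
        exact_mod_cast (show vv^2 * uu^2 = vv * (vv*uu^2) by ring)
      · rw [sum_atE03 x, x0, x3, xw03, hlam]
        exact_mod_cast (show vv^2 * uu^2 = vv * (vv*uu^2) by ring)
      · rw [sum_atE12 x, x1, x2, xw12, hlam]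
        exact_mod_cast (show vv^2 * uu^2 = vv * (vv*uu^2) by ring)
      · rw [sum_atE13 x, x1, x3, xw13, hlam]
        exact_mod_cast (show vv^2 * uu^2 = vv * (vv*uu^2) by ring)
      · rw [sum_atE23 x, x2, x3, xw23, hlam]
        exact_mod_cast (show vv^2 * (uu^2)^2 = (vv*uu^2) * (vv*uu^2) by ring)
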